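/- Let M = ℂ³ with coordinates (t₁,t₂,t₃), and define a commutative multiplication on the tangent bundle by e = ∂₁ as unit, ∂₂∘∂₂ = f·∂₃, ∂₂∘∂₃ = 0, ∂₃∘∂₃ = 0, where f ∈ ℂ{t₂,t₃}. Then this multiplication is associative, and the ideal I = (y₁ − 1, y₂² − f·y₃, y₂y₃, y₃²) satisfies {I, I} ⊆ I, so (M, ∘, e) is an F-manifold. -/

import Mathlib

noncomputable section

abbrev Rts : Type := MvPowerSeries (Fin 2) ℂ

/-- partial derivative ∂/∂tⱼ on power series in (t₂,t₃) -/
def pderivPS (j : Fin 2) (f : Rts) : Rts :=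
  fun m => ((m j : ℂ) + 1) * f (m + Finsupp.single j 1)

abbrev Sy : Type := MvPolynomial (Fin 3) Rts

/-- apply ∂/∂tⱼ to the coefficients of a polynomial in (y₁,y₂,y₃) -/
def Dt (j : Fin 2) (f : Sy) : Sy :=
  f.support.sum (fun m => MvPolynomial.monomial m (pderivPS j (MvPolynomial.coeff m f)))

/-- Poisson bracket `{f,g} = Σₖ (∂f/∂tₖ ∂g/∂yₖ − ∂f/∂yₖ ∂g/∂tₖ)` (`t₁`-derivatives vanish);
`tₖ` for `k ∈ {2,3}` corresponds to the `y`-variable of index `k`. -/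
def poisson (f g : Sy) : Sy :=
  ∑ j : Fin 2,
    (Dt j f * MvPolynomial.pderiv j.succ g
      - MvPolynomial.pderiv j.succ f * Dt j g)

/-- The multiplication on vector fields `X₁∂₁ + X₂∂₂ + X₃∂₃` (components in
`ℂ{t₂,t₃}`) determined by the unit `e = ∂₁` and
`∂₂∘∂₂ = f·∂₃`, `∂₂∘∂₃ = 0`, `∂₃∘∂₃ = 0`. -/
def fMul (f : Rts) (x y : Rts × Rts × Rts) : Rts × Rts × Rts :=
  (x.1 * y.1,
   x.1 * y.2.1 + x.2.1 * y.1,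
   x.1 * y.2.2 + x.2.2 * y.1 + f * (x.2.1 * y.2.1))

lemma pderivPS_zero (j : Fin 2) : pderivPS j 0 = 0 := by
  funext m; show _ * (0:ℂ) = (0:ℂ); ring

lemma pderivPS_add (j : Fin 2) (a b : Rts) :
    pderivPS j (a + b) = pderivPS j a + pderivPS j b := by
  funext m
  show _ * (a _ + b _) = _ * a _ + _ * b _
  ring

open Finset in
lemma key_sum (j : Fin 2) (m : Fin 2 →₀ ℕ) (F : (Fin 2 →₀ ℕ) → (Fin 2 →₀ ℕ) → ℂ) :
    ∑ p ∈ (antidiagonal (m + Finsupp.single j 1) : Finset ((Fin 2 →₀ ℕ) × (Fin 2 →₀ ℕ))), (p.1 j : ℂ) * F p.1 p.2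
      = ∑ q ∈ (antidiagonal m : Finset ((Fin 2 →₀ ℕ) × (Fin 2 →₀ ℕ))), ((q.1 j : ℂ) + 1) * F (q.1 + Finsupp.single j 1) q.2 := by
  classical
  set δ := Finsupp.single j 1 with hδ
  rw [← Finset.sum_filter_of_ne (p := fun p : (Fin 2 →₀ ℕ) × (Fin 2 →₀ ℕ) => p.1 j ≠ 0)
      (by intro x _ hx h0; exact hx (by rw [h0]; push_cast; ring))]
  refine Finset.sum_nbij' (i := fun p => (p.1 - δ, p.2)) (j := fun q => (q.1 + δ, q.2))
    ?_ ?_ ?_ ?_ ?_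
  · intro p hp
    simp only [Finset.mem_filter, Finset.HasAntidiagonal.mem_antidiagonal] at hp ⊢
    obtain ⟨h1, h2⟩ := hp
    have hle : δ ≤ p.1 := by rw [hδ, Finsupp.single_le_iff]; omega
    have hc : p.1 - δ + δ = p.1 := tsub_add_cancel_of_le hle
    apply add_right_cancel (b := δ)
    rw [add_right_comm, hc, h1, add_comm m δ]
  · intro q hq
    simp only [Finset.mem_filter, Finset.HasAntidiagonal.mem_antidiagonal] at hq ⊢
    constructor
    · rw [add_right_comm, hq]
    · simp [hδ]
  · intro p hp
    simp only [Finset.mem_filter, Finset.HasAntidiagonal.mem_antidiagonal] at hp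
    have hle : δ ≤ p.1 := by rw [hδ, Finsupp.single_le_iff]; omega
    ext <;> simp [tsub_add_cancel_of_le hle]
  · intro q _
    ext <;> simp
  · intro p hp
    simp only [Finset.mem_filter, Finset.HasAntidiagonal.mem_antidiagonal] at hp
    have hle : δ ≤ p.1 := by rw [hδ, Finsupp.single_le_iff]; omega
    have hc : p.1 - δ + δ = p.1 := tsub_add_cancel_of_le hle
    have h2 : ((p.1 - δ) j + 1 : ℂ) = (p.1 j : ℂ) := by
      have := congrArg (fun x => x j) hc
      simp only [Finsupp.add_apply, hδ, Finsupp.single_eq_same] at this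
      push_cast [← this]
      ring
    rw [hc, ← h2]

open Finset in
lemma sum_antidiag_swap (n : Fin 2 →₀ ℕ) (G : (Fin 2 →₀ ℕ) → (Fin 2 →₀ ℕ) → ℂ) :
    ∑ p ∈ (antidiagonal n : Finset ((Fin 2 →₀ ℕ) × (Fin 2 →₀ ℕ))), G p.1 p.2
      = ∑ p ∈ (antidiagonal n : Finset ((Fin 2 →₀ ℕ) × (Fin 2 →₀ ℕ))), G p.2 p.1 := by
  refine Finset.sum_nbij' (i := Prod.swap) (j := Prod.swap) ?_ ?_ ?_ ?_ ?_ <;>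
    simp [Finset.swap_mem_antidiagonal]
  all_goals exact fun a b h => by rw [add_comm]; exact h

set_option maxHeartbeats 1000000 in
open Finset in
lemma pderivPS_mul (j : Fin 2) (a b : Rts) :
    pderivPS j (a * b) = pderivPS j a * b + a * pderivPS j b := by
  classical
  funext m
  have hadd : ∀ x y : Rts, (x + y) m = x m + y m := fun _ _ => rfl
  have hab : (a * b) (m + Finsupp.single j 1)
      = ∑ p ∈ (antidiagonal (m + Finsupp.single j 1) : Finset ((Fin 2 →₀ ℕ) × (Fin 2 →₀ ℕ))),
          a p.1 * b p.2 := MvPowerSeries.coeff_mul _ _ _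
  have h1 : (pderivPS j a * b) m
      = ∑ q ∈ (antidiagonal m : Finset ((Fin 2 →₀ ℕ) × (Fin 2 →₀ ℕ))),
          ((q.1 j : ℂ) + 1) * (a (q.1 + Finsupp.single j 1) * b q.2) := by
    refine (MvPowerSeries.coeff_mul _ _ _).trans (Finset.sum_congr rfl fun q _ => ?_)
    have e1 : (MvPowerSeries.coeff q.1) (pderivPS j a)
        = ((q.1 j : ℂ) + 1) * a (q.1 + Finsupp.single j 1) := rfl
    have e2 : (MvPowerSeries.coeff q.2) b = b q.2 := rfl
    rw [e1, e2, mul_assoc]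
  have h2 : (a * pderivPS j b) m
      = ∑ q ∈ (antidiagonal m : Finset ((Fin 2 →₀ ℕ) × (Fin 2 →₀ ℕ))),
          ((q.2 j : ℂ) + 1) * (a q.1 * b (q.2 + Finsupp.single j 1)) := by
    refine (MvPowerSeries.coeff_mul _ _ _).trans (Finset.sum_congr rfl fun q _ => ?_)
    have e1 : (MvPowerSeries.coeff q.1) a = a q.1 := rfl
    have e2 : (MvPowerSeries.coeff q.2) (pderivPS j b)
        = ((q.2 j : ℂ) + 1) * b (q.2 + Finsupp.single j 1) := rfl
    rw [e1, e2]; ring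
  have hL : pderivPS j (a * b) m = ((m j : ℂ) + 1) * (a * b) (m + Finsupp.single j 1) := rfl
  rw [hadd, hL, h1, h2, hab, Finset.mul_sum]
  have hsplit : ∀ p ∈ (antidiagonal (m + Finsupp.single j 1) : Finset ((Fin 2 →₀ ℕ) × (Fin 2 →₀ ℕ))),
      ((m j : ℂ) + 1) * (a p.1 * b p.2)
        = (p.1 j : ℂ) * (a p.1 * b p.2) + (p.2 j : ℂ) * (a p.1 * b p.2) := by
    intro p hp
    rw [Finset.HasAntidiagonal.mem_antidiagonal] at hp
    have h3 : p.1 j + p.2 j = m j + 1 := by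
      have := congrArg (fun x => x j) hp
      simpa [Finsupp.add_apply] using this
    have h4 : ((p.1 j : ℂ) + (p.2 j : ℂ)) = (m j : ℂ) + 1 := by exact_mod_cast congrArg (Nat.cast (R := ℂ)) h3
    rw [← h4]; ring
  rw [Finset.sum_congr rfl hsplit, Finset.sum_add_distrib]
  congr 1
  · exact key_sum j m (fun x y => a x * b y)
  · rw [← sum_antidiag_swap (m + Finsupp.single j 1) (fun x y => (x j : ℂ) * (a y * b x)),
      key_sum j m (fun x y => a y * b x),
      sum_antidiag_swap m (fun x y => ((x j : ℂ) + 1) * (a y * b (x + Finsupp.single j 1)))]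

/-- pderivPS as an additive hom -/
def pderivHom (j : Fin 2) : Rts →+ Rts where
  toFun := pderivPS j
  map_zero' := pderivPS_zero j
  map_add' := pderivPS_add j

lemma coeff_Dt (j : Fin 2) (g : Sy) (m : Fin 3 →₀ ℕ) :
    MvPolynomial.coeff m (Dt j g) = pderivPS j (MvPolynomial.coeff m g) := by
  classical
  rw [Dt, MvPolynomial.coeff_sum]
  simp only [MvPolynomial.coeff_monomial]
  rw [Finset.sum_ite_eq' g.support m (fun n => pderivPS j (MvPolynomial.coeff n g))]
  split_ifs with h
  · rfl
  · rw [MvPolynomial.notMem_support_iff.mp h, pderivPS_zero]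

lemma Dt_add (j : Fin 2) (a b : Sy) : Dt j (a + b) = Dt j a + Dt j b := by
  ext m
  simp [coeff_Dt, pderivPS_add]

lemma Dt_mul (j : Fin 2) (a b : Sy) : Dt j (a * b) = Dt j a * b + a * Dt j b := by
  classical
  ext m
  rw [MvPolynomial.coeff_add, coeff_Dt, MvPolynomial.coeff_mul, MvPolynomial.coeff_mul,
    MvPolynomial.coeff_mul]
  have hsum : pderivPS j (∑ p ∈ Finset.HasAntidiagonal.antidiagonal m,
        MvPolynomial.coeff p.1 a * MvPolynomial.coeff p.2 b)
      = ∑ p ∈ Finset.HasAntidiagonal.antidiagonal m,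
          pderivPS j (MvPolynomial.coeff p.1 a * MvPolynomial.coeff p.2 b) :=
    map_sum (pderivHom j) _ _
  have hleib : ∑ p ∈ Finset.HasAntidiagonal.antidiagonal m,
        pderivPS j (MvPolynomial.coeff p.1 a * MvPolynomial.coeff p.2 b)
      = ∑ p ∈ Finset.HasAntidiagonal.antidiagonal m,
          (MvPolynomial.coeff p.1 (Dt j a) * MvPolynomial.coeff p.2 b
            + MvPolynomial.coeff p.1 a * MvPolynomial.coeff p.2 (Dt j b)) :=
    Finset.sum_congr rfl fun p _ => by rw [pderivPS_mul, coeff_Dt, coeff_Dt]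
  rw [hsum, hleib, Finset.sum_add_distrib]

lemma Dt_zero (j : Fin 2) : Dt j 0 = 0 := by ext m; simp [coeff_Dt, pderivPS_zero]

lemma pderivPS_neg (j : Fin 2) (a : Rts) : pderivPS j (-a) = -pderivPS j a := by
  funext n
  show ((n j : ℂ) + 1) * (-a) (n + Finsupp.single j 1)
      = -(((n j : ℂ) + 1) * a (n + Finsupp.single j 1))
  have h : (-a) (n + Finsupp.single j 1) = -(a (n + Finsupp.single j 1)) := rfl
  rw [h]; ring

lemma Dt_neg (j : Fin 2) (a : Sy) : Dt j (-a) = -Dt j a := by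
  ext m
  simp [coeff_Dt, MvPolynomial.coeff_neg, pderivPS_neg]

lemma Dt_sub (j : Fin 2) (a b : Sy) : Dt j (a - b) = Dt j a - Dt j b := by
  rw [sub_eq_add_neg, Dt_add, Dt_neg, sub_eq_add_neg]

lemma Dt_C (j : Fin 2) (c : Rts) : Dt j (MvPolynomial.C c) = MvPolynomial.C (pderivPS j c) := by
  classical
  ext m
  simp only [coeff_Dt, MvPolynomial.coeff_C]
  split_ifs with h
  · rfl
  · exact congrFun (pderivPS_zero j) _ |>.trans rfl

lemma pderivPS_one (j : Fin 2) : pderivPS j (1 : Rts) = 0 := by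
  funext m
  show ((m j : ℂ) + 1) * (MvPowerSeries.coeff (m + Finsupp.single j 1) 1) = 0
  rw [MvPowerSeries.coeff_one]
  have : m + Finsupp.single j 1 ≠ 0 := by
    intro h
    have := congrArg (fun x => x j) h
    simp [Finsupp.add_apply] at this
  simp [this]

lemma Dt_one (j : Fin 2) : Dt j 1 = 0 := by
  rw [show (1 : Sy) = MvPolynomial.C 1 from rfl, Dt_C, pderivPS_one, map_zero]

lemma Dt_X (j : Fin 2) (i : Fin 3) : Dt j (MvPolynomial.X i) = 0 := by
  classical
  ext m
  simp only [coeff_Dt, MvPolynomial.coeff_X', MvPolynomial.coeff_zero]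
  split_ifs with h
  · exact congrFun (pderivPS_one j) _
  · exact congrFun (pderivPS_zero j) _

lemma poisson_zero_left (g : Sy) : poisson 0 g = 0 := by
  simp [poisson, Dt_zero]

lemma poisson_zero_right (g : Sy) : poisson g 0 = 0 := by
  simp [poisson, Dt_zero]

lemma poisson_add_left (a b c : Sy) : poisson (a + b) c = poisson a c + poisson b c := by
  unfold poisson
  rw [← Finset.sum_add_distrib]
  refine Finset.sum_congr rfl fun j _ => ?_
  rw [Dt_add, map_add]
  ring

lemma poisson_add_right (a b c : Sy) : poisson a (b + c) = poisson a b + poisson a c := by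
  unfold poisson
  rw [← Finset.sum_add_distrib]
  refine Finset.sum_congr rfl fun j _ => ?_
  rw [Dt_add, map_add]
  ring

lemma poisson_mul_left (a b c : Sy) :
    poisson (a * b) c = a * poisson b c + b * poisson a c := by
  unfold poisson
  rw [Finset.mul_sum, Finset.mul_sum, ← Finset.sum_add_distrib]
  refine Finset.sum_congr rfl fun j _ => ?_
  rw [Dt_mul, MvPolynomial.pderiv_mul]
  ring

lemma poisson_mul_right (a b c : Sy) :
    poisson a (b * c) = b * poisson a c + c * poisson a b := by
  unfold poisson
  rw [Finset.mul_sum, Finset.mul_sum, ← Finset.sum_add_distrib]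
  refine Finset.sum_congr rfl fun j _ => ?_
  rw [Dt_mul, MvPolynomial.pderiv_mul]
  ring

open MvPolynomial in
lemma Dt_g1 (j : Fin 2) : Dt j ((X 0 : Sy) - 1) = 0 := by
  rw [Dt_sub, Dt_X, Dt_one, sub_zero]

open MvPolynomial in
lemma Dt_g2 (f : Rts) (j : Fin 2) :
    Dt j ((X 1 : Sy) ^ 2 - C f * X 2) = -(C (pderivPS j f) * X 2) := by
  rw [Dt_sub, sq, Dt_mul, Dt_X, Dt_mul, Dt_X, Dt_C]
  ring

open MvPolynomial in
lemma Dt_g3 (j : Fin 2) : Dt j ((X 1 : Sy) * X 2) = 0 := by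
  simp [Dt_mul, Dt_X]

open MvPolynomial in
lemma Dt_g4 (j : Fin 2) : Dt j ((X 2 : Sy) ^ 2) = 0 := by
  rw [sq]; simp [Dt_mul, Dt_X]

open MvPolynomial in
lemma mem_comb {I : Ideal Sy} {u v E : Sy} (hu : u ∈ I) (hv : v ∈ I) (a b : Sy)
    (h : E = a * u + b * v) : E ∈ I :=
  h ▸ I.add_mem (I.mul_mem_left a hu) (I.mul_mem_left b hv)

open MvPolynomial in
lemma base_mem (f : Rts) (x y : Sy)
    (hx : x ∈ ({(X 0 : Sy) - 1, (X 1 : Sy) ^ 2 - C f * X 2, (X 1 : Sy) * X 2, (X 2 : Sy) ^ 2} : Set Sy))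
    (hy : y ∈ ({(X 0 : Sy) - 1, (X 1 : Sy) ^ 2 - C f * X 2, (X 1 : Sy) * X 2, (X 2 : Sy) ^ 2} : Set Sy)) :
    poisson x y ∈ Ideal.span ({(X 0 : Sy) - 1, (X 1 : Sy) ^ 2 - C f * X 2, (X 1 : Sy) * X 2, (X 2 : Sy) ^ 2} : Set Sy) := by
  have h3 : (X 1 : Sy) * X 2 ∈ Ideal.span ({(X 0 : Sy) - 1, (X 1 : Sy) ^ 2 - C f * X 2, (X 1 : Sy) * X 2, (X 2 : Sy) ^ 2} : Set Sy) :=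
    Ideal.subset_span (by simp)
  have h4 : (X 2 : Sy) ^ 2 ∈ Ideal.span ({(X 0 : Sy) - 1, (X 1 : Sy) ^ 2 - C f * X 2, (X 1 : Sy) * X 2, (X 2 : Sy) ^ 2} : Set Sy) :=
    Ideal.subset_span (by simp)
  simp only [Set.mem_insert_iff, Set.mem_singleton_iff] at hx hy
  rcases hx with rfl | rfl | rfl | rfl <;> rcases hy with rfl | rfl | rfl | rfl <;>
    simp only [poisson, Fin.sum_univ_two,
      show (0:Fin 2).succ = (1:Fin 3) from rfl, show (1:Fin 2).succ = (2:Fin 3) from rfl,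
      Dt_g1, Dt_g2, Dt_g3, Dt_g4, map_sub, pderiv_mul, pderiv_pow, pderiv_X, pderiv_C,
      pderiv_one, (by decide : ¬((2:Fin 3) = 1)), (by decide : ¬((1:Fin 3) = 2))]
  all_goals norm_num [Pi.single_apply, (by decide : ¬((2:Fin 3) = 1)), (by decide : ¬((1:Fin 3) = 2))]
  all_goals try exact Ideal.zero_mem _
  all_goals first
    | (refine mem_comb h3 h4 0 0 ?_; ring1)
    | (refine mem_comb h3 h4 (-(C (pderivPS 1 f))) (-(C (pderivPS 0 f))) ?_; ring1)
    | (refine mem_comb h3 h4 0 (-(2 * C (pderivPS 1 f))) ?_; ring1)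
    | (refine mem_comb h3 h4 (C (pderivPS 1 f)) (C (pderivPS 0 f)) ?_; ring1)

open MvPolynomial in
/-- For `M = ℂ³` with unit `e = ∂₁` and `∂₂∘∂₂ = f·∂₃`, `∂₂∘∂₃ = ∂₃∘∂₃ = 0`
(`f ∈ ℂ{t₂,t₃}`), the multiplication is associative and the spectral ideal
`I = (y₁ − 1, y₂² − f·y₃, y₂y₃, y₃²)` is closed under the Poisson bracket, so
`(M,∘,e)` is an `F`-manifold. -/
theorem fMul_assoc_and_poisson_closed (f : Rts) :
    (∀ x y z : Rts × Rts × Rts, fMul f (fMul f x y) z = fMul f x (fMul f y z)) ∧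
    (∀ g ∈ Ideal.span {(X 0 : Sy) - 1, (X 1 : Sy) ^ 2 - C f * X 2,
        (X 1 : Sy) * X 2, (X 2 : Sy) ^ 2},
     ∀ g' ∈ Ideal.span {(X 0 : Sy) - 1, (X 1 : Sy) ^ 2 - C f * X 2,
        (X 1 : Sy) * X 2, (X 2 : Sy) ^ 2},
       poisson g g' ∈ Ideal.span {(X 0 : Sy) - 1, (X 1 : Sy) ^ 2 - C f * X 2,
        (X 1 : Sy) * X 2, (X 2 : Sy) ^ 2}) := by
  constructor
  · intro x y z
    simp only [fMul, Prod.mk.injEq]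
    refine ⟨by ring, by ring, by ring⟩
  · intro g hg g' hg'
    induction hg, hg' using Submodule.span_induction₂ with
    | mem_mem x y hx hy => exact base_mem f x y hx hy
    | zero_left y hy => rw [poisson_zero_left]; exact Ideal.zero_mem _
    | zero_right x hx => rw [poisson_zero_right]; exact Ideal.zero_mem _
    | add_left x y z hx hy hz h1 h2 =>
        rw [poisson_add_left]; exact Ideal.add_mem _ h1 h2
    | add_right x y z hx hy hz h1 h2 =>
        rw [poisson_add_right]; exact Ideal.add_mem _ h1 h2
    | smul_left r x y hx hy h =>
        rw [smul_eq_mul, poisson_mul_left]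
        exact Ideal.add_mem _ (Ideal.mul_mem_left _ r h)
          (Ideal.mul_mem_right _ _ hx)
    | smul_right r x y hx hy h =>
        rw [smul_eq_mul, poisson_mul_right]
        exact Ideal.add_mem _ (Ideal.mul_mem_left _ r h)
          (Ideal.mul_mem_right _ _ hy)

end
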